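/- Let P₁, P₂, τ₁, τ₂ > 0 satisfy τ₁·γ(P₂) ≤ τ₂·(γ(P₁+P₂) − γ(P₂)) (Case III), set C = ((τ₁/τ₂)·γ(P₂), γ(P₂)), and let w ∈ [0,1]. Let D₂(r₁, r₂) = w·τ₁/γ(P₁) + τ₂·(γ(P₁) − w·r₁)/(γ(P₁)·r₂). Then for every (r₁, r₂) ∈ C₁ with r₂ > 0 and τ₁·r₂ ≥ τ₂·r₁, one has D₂(C) ≤ D₂(r₁, r₂). -/

import Mathlib

/-- γ(x) = (1/2)·log₂(1+x). -/
noncomputable def gam (x : ℝ) : ℝ := (1/2) * Real.logb 2 (1 + x)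

/-- The standard two-user Gaussian MAC capacity region. -/
def C1 (P₁ P₂ : ℝ) : Set (ℝ × ℝ) :=
  {r : ℝ × ℝ | 0 ≤ r.1 ∧ r.1 ≤ gam P₁ ∧ 0 ≤ r.2 ∧ r.2 ≤ gam P₂ ∧
    r.1 + r.2 ≤ gam (P₁ + P₂)}

/-- D₂(r₁, r₂) = w·τ₁/γ(P₁) + τ₂·(γ(P₁) − w·r₁)/(γ(P₁)·r₂). -/
noncomputable def D2 (w τ₁ τ₂ P₁ r₁ r₂ : ℝ) : ℝ :=
  w * τ₁ / gam P₁ + τ₂ * (gam P₁ - w * r₁) / (gam P₁ * r₂)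

lemma gam_pos {x : ℝ} (hx : 0 < x) : 0 < gam x := by
  unfold gam
  have : 0 < Real.logb 2 (1 + x) :=
    Real.logb_pos one_lt_two (by linarith)
  linarith

theorem stmt_9 (P₁ P₂ τ₁ τ₂ w : ℝ) (hP₁ : 0 < P₁) (hP₂ : 0 < P₂)
    (hτ₁ : 0 < τ₁) (hτ₂ : 0 < τ₂)
    (hcase : τ₁ * gam P₂ ≤ τ₂ * (gam (P₁ + P₂) - gam P₂))
    (hw : w ∈ Set.Icc (0:ℝ) 1) :
    ∀ r₁ r₂ : ℝ, (r₁, r₂) ∈ C1 P₁ P₂ → 0 < r₂ → τ₂ * r₁ ≤ τ₁ * r₂ →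
      D2 w τ₁ τ₂ P₁ ((τ₁ / τ₂) * gam P₂) (gam P₂) ≤ D2 w τ₁ τ₂ P₁ r₁ r₂ := by
  intro r₁ r₂ hmem hr₂ hratio
  obtain ⟨h1, h2, h3, h4, h5⟩ := hmem
  obtain ⟨hw0, hw1⟩ := hw
  have hG : 0 < gam P₁ := gam_pos hP₁
  have hg : 0 < gam P₂ := gam_pos hP₂
  unfold D2
  have key : (gam P₁ - w * ((τ₁ / τ₂) * gam P₂)) / gam P₂ ≤
      (gam P₁ - w * r₁) / r₂ := by
    rw [div_le_div_iff₀ hg hr₂]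
    have hA : w * ((τ₁ / τ₂) * gam P₂) = w * τ₁ * gam P₂ / τ₂ := by ring
    rw [hA, sub_mul, div_mul_eq_mul_div, sub_div' (ne_of_gt hτ₂),
      div_le_iff₀ hτ₂] at *
    nlinarith [mul_le_mul_of_nonneg_left hratio (mul_nonneg hw0 hg.le),
      mul_le_mul_of_nonneg_left h4 (mul_nonneg hG.le hτ₂.le), hr₂.le]
  refine add_le_add le_rfl ?_
  calc τ₂ * (gam P₁ - w * ((τ₁ / τ₂) * gam P₂)) / (gam P₁ * gam P₂)
        = τ₂ / gam P₁ * ((gam P₁ - w * ((τ₁ / τ₂) * gam P₂)) / gam P₂) := by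
          field_simp
      _ ≤ τ₂ / gam P₁ * ((gam P₁ - w * r₁) / r₂) := by
          apply mul_le_mul_of_nonneg_left key (by positivity)
      _ = τ₂ * (gam P₁ - w * r₁) / (gam P₁ * r₂) := by
          field_simp
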